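/- arXiv:1909.13781 — 5 statements merged into one kernel-verified Lean document; each statement's English description precedes it below -/
import Mathlib

section
/- Let G be a group. Suppose that for every d ∈ ℕ there exists a function g from bit strings of length at most d to G such that g(v) = ⁅g(v·0), g(v·1)⁆ for all v of length < d, and g(ε) ≠ 1. Then G is not solvable. -/
/-- If for every `d` there is a labelling `g` of bit strings of length at most `d` by
elements of `G` with `g v = ⁅g (v·0), g (v·1)⁆` for `|v| < d` and `g ε ≠ 1`, then
`G` is not solvable. -/
theorem stmt_3 (G : Type*) [Group G]
    (h : ∀ d : ℕ, ∃ g : List Bool → G,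
      (∀ v : List Bool, v.length < d →
        g v = (g (v ++ [false]))⁻¹ * (g (v ++ [true]))⁻¹ * g (v ++ [false]) * g (v ++ [true])) ∧
      g [] ≠ 1) :
    ¬ IsSolvable G := by
  rintro ⟨⟨n, hn⟩⟩
  obtain ⟨g, hg, hne⟩ := h n
  have key : ∀ k, ∀ v : List Bool, v.length + k ≤ n → g v ∈ derivedSeries G k := by
    intro k
    induction k with
    | zero => intro v _; exact Subgroup.mem_top _
    | succ k ih =>
      intro v hv
      have h0 : g (v ++ [false]) ∈ derivedSeries G k := ih _ (by simp; omega)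
      have h1 : g (v ++ [true]) ∈ derivedSeries G k := ih _ (by simp; omega)
      rw [hg v (by omega)]
      open scoped commutatorElement in
      have heq : (g (v ++ [false]))⁻¹ * (g (v ++ [true]))⁻¹ * g (v ++ [false]) * g (v ++ [true])
          = ⁅(g (v ++ [false]))⁻¹, (g (v ++ [true]))⁻¹⁆ := by
        group
      rw [heq, derivedSeries_succ]
      exact Subgroup.commutator_mem_commutator (inv_mem h0) (inv_mem h1)
  have hmem := key n [] (by simp)
  rw [hn] at hmem
  exact hne (Subgroup.mem_bot.mp hmem)
end

section
/- Let G be a group, N a normal subgroup of G such that N is solvable of derived length δ (i.e. the δ-th derived subgroup of N is trivial). Let d ∈ ℕ and let g be a function from bit strings of length at most d + δ to G satisfying g(v) = ⁅g(v·0), g(v·1)⁆ for all v of length < d + δ and g(ε) ≠ 1. Then there exists a bit string u of length δ such that g(u) ∉ N. -/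
/-- Let `N ⊴ G` be solvable of derived length `δ` (i.e. `derivedSeries N δ = ⊥`).
If `g` labels bit strings of length at most `d + δ` with `g v = ⁅g (v·0), g (v·1)⁆`
for `|v| < d + δ` and `g ε ≠ 1`, then some `u` of length `δ` satisfies `g u ∉ N`. -/
theorem stmt_4 (G : Type*) [Group G] (N : Subgroup G) [N.Normal] (δ : ℕ)
    (hN : derivedSeries N δ = ⊥) (d : ℕ) (g : List Bool → G)
    (hg : ∀ v : List Bool, v.length < d + δ →
      g v = (g (v ++ [false]))⁻¹ * (g (v ++ [true]))⁻¹ * g (v ++ [false]) * g (v ++ [true]))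
    (hne : g [] ≠ 1) :
    ∃ u : List Bool, u.length = δ ∧ g u ∉ N := by
  by_contra h
  push_neg at h
  have key : ∀ k, k ≤ δ → ∀ v : List Bool, v.length = δ - k →
      g v ∈ (derivedSeries N k).map N.subtype := by
    intro k
    induction k with
    | zero =>
      intro _ v hv
      simp only [Nat.sub_zero] at hv
      have := h v hv
      simpa [derivedSeries_zero, ← MonoidHom.range_eq_map, Subgroup.range_subtype] using this
    | succ k ih =>
      intro hk v hv
      have hδ : 1 ≤ δ := le_trans (Nat.le_add_left 1 k) hk
      have hlt : v.length < d + δ := by omega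
      have h0 : (v ++ [false]).length = δ - k := by simp [hv]; omega
      have h1 : (v ++ [true]).length = δ - k := by simp [hv]; omega
      have m0 := ih (Nat.le_of_succ_le hk) _ h0
      have m1 := ih (Nat.le_of_succ_le hk) _ h1
      open scoped commutatorElement in
      have heq : g v = ⁅(g (v ++ [false]))⁻¹, (g (v ++ [true]))⁻¹⁆ := by
        rw [hg v hlt, commutatorElement_def]
        group
      rw [heq, derivedSeries_succ, Subgroup.map_commutator]
      exact Subgroup.commutator_mem_commutator (inv_mem m0) (inv_mem m1)
  have := key δ le_rfl [] (by simp)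
  rw [hN] at this
  simp only [Subgroup.map_bot, Subgroup.mem_bot] at this
  exact hne this
end

section
/- Let k, c ∈ ℕ with c ≥ 1 and let s : Fin k → ℕ satisfy s(i) ≥ (∑_{j > i} s(j)) + c for all i. Then for any two distinct subsets A, B of Fin k, the subset sums differ by at least c: |∑_{i∈A} s(i) − ∑_{i∈B} s(i)| ≥ c. -/
lemma stmt_7_aux (k c : ℕ) (s : Fin k → ℕ)
    (hs : ∀ i : Fin k, (∑ j ∈ Finset.univ.filter (fun j => i < j), s j) + c ≤ s i)
    (A B : Finset (Fin k)) (i : Fin k) (hiA : i ∈ A) (hiB : i ∉ B)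
    (hlt : ∀ j ∈ B \ A, i < j) :
    (c : ℤ) ≤ (∑ i ∈ A, (s i : ℤ)) - ∑ i ∈ B, (s i : ℤ) := by
  rw [← Finset.sum_sdiff_sub_sum_sdiff]
  have h1 : (s i : ℤ) ≤ ∑ j ∈ A \ B, (s j : ℤ) := by
    apply Finset.single_le_sum (f := fun j => (s j : ℤ)) (fun j _ => by positivity)
    exact Finset.mem_sdiff.2 ⟨hiA, hiB⟩
  have h2 : ∑ j ∈ B \ A, (s j : ℤ) ≤ ∑ j ∈ Finset.univ.filter (fun j => i < j), (s j : ℤ) := by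
    apply Finset.sum_le_sum_of_subset_of_nonneg
    · intro j hj
      exact Finset.mem_filter.2 ⟨Finset.mem_univ j, hlt j hj⟩
    · intro j _ _; positivity
  have h3 := hs i
  have h3' : (∑ j ∈ Finset.univ.filter (fun j => i < j), (s j : ℤ)) + c ≤ (s i : ℤ) := by
    exact_mod_cast h3
  omega

/-- If `s : Fin k → ℕ` satisfies `s i ≥ (∑_{j > i} s j) + c` with `c ≥ 1`, then the
subset sums of any two distinct subsets differ by at least `c`. -/
theorem stmt_7 (k c : ℕ) (hc : 1 ≤ c) (s : Fin k → ℕ)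
    (hs : ∀ i : Fin k, (∑ j ∈ Finset.univ.filter (fun j => i < j), s j) + c ≤ s i)
    (A B : Finset (Fin k)) (hAB : A ≠ B) :
    (c : ℤ) ≤ |(∑ i ∈ A, (s i : ℤ)) - ∑ i ∈ B, (s i : ℤ)| := by
  have hD : ((A \ B) ∪ (B \ A)).Nonempty := by
    rw [Finset.nonempty_iff_ne_empty]
    intro h
    apply hAB
    have h1 : A \ B = ∅ := Finset.union_eq_empty.1 h |>.1
    have h2 : B \ A = ∅ := Finset.union_eq_empty.1 h |>.2
    exact Finset.Subset.antisymm (Finset.sdiff_eq_empty_iff_subset.1 h1)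
      (Finset.sdiff_eq_empty_iff_subset.1 h2)
  set D := (A \ B) ∪ (B \ A) with hDdef
  let i := D.min' hD
  have hiD : i ∈ D := D.min'_mem hD
  have hmin : ∀ j ∈ D, i ≤ j := fun j hj => D.min'_le j hj
  rcases Finset.mem_union.1 hiD with h | h
  · rw [Finset.mem_sdiff] at h
    have := stmt_7_aux k c s hs A B i h.1 h.2 (fun j hj => by
      have hle := hmin j (Finset.mem_union_right _ hj)
      have : j ≠ i := by
        rintro rfl
        exact (Finset.mem_sdiff.1 hj).2 h.1
      omega)
    calc (c : ℤ) ≤ _ := this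
      _ ≤ _ := le_abs_self _
  · rw [Finset.mem_sdiff] at h
    have := stmt_7_aux k c s hs B A i h.1 h.2 (fun j hj => by
      have hle := hmin j (Finset.mem_union_left _ hj)
      have : j ≠ i := by
        rintro rfl
        exact (Finset.mem_sdiff.1 hj).2 h.1
      omega)
    rw [abs_sub_comm]
    calc (c : ℤ) ≤ _ := this
      _ ≤ _ := le_abs_self _
end

section
/- Let G be a group such that the wreath product G ≀ (ℤ/2) embeds into G (i.e. there is an injective group homomorphism (ZMod 2 → G) ⋊ ZMod 2 → G, where ZMod 2 acts by translating the argument). Then G ≀ (ℤ/4) also embeds into G. -/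
/-- The translation automorphism `f ↦ (y ↦ f (y + c))` of the pointwise group `C → G`. -/
def shiftEquiv (G : Type) [Group G] {C : Type} [AddCommGroup C] (c : C) :
    (C → G) ≃* (C → G) where
  toFun f := fun y => f (y + c)
  invFun f := fun y => f (y - c)
  left_inv f := by funext y; simp
  right_inv f := by funext y; simp
  map_mul' f g := rfl

/-- The action of `C` on `C → G` by translation of the argument. -/
def shiftHom (G : Type) [Group G] (C : Type) [AddCommGroup C] :
    Multiplicative C →* MulAut (C → G) where
  toFun c := shiftEquiv G c.toAdd
  map_one' := by
    ext f y
    simp [shiftEquiv]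
  map_mul' a b := by
    ext f y
    simp [shiftEquiv, add_assoc]

/-- The regular wreath product `G ≀ C` for an additive group `C`, realized as the
semidirect product `(C → G) ⋊ C` where `C` translates the argument; the multiplication
is `(f₁, h₁)(f₂, h₂) = (y ↦ f₁ y * f₂ (y + h₁), h₁ + h₂)`. -/
def Wr (G : Type) [Group G] (C : Type) [AddCommGroup C] : Type :=
  SemidirectProduct (C → G) (Multiplicative C) (shiftHom G C)

instance (G : Type) [Group G] (C : Type) [AddCommGroup C] : Group (Wr G C) :=
  inferInstanceAs (Group (SemidirectProduct (C → G) (Multiplicative C) (shiftHom G C)))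

namespace Stmt10

open SemidirectProduct

section mapBase
variable {G G' : Type} [Group G] [Group G'] (C : Type) [AddCommGroup C]

/-- Functoriality of `Wr` in the first variable. -/
def mapBase (φ : G →* G') : Wr G C →* Wr G' C :=
  SemidirectProduct.map (φ.compLeft C) (MonoidHom.id _) (fun c => by
    ext f y
    rfl)

theorem mapBase_inj (φ : G →* G') (hφ : Function.Injective φ) :
    Function.Injective (mapBase C φ) := by
  intro x y hxy
  have h1 : (mapBase C φ x).left = (mapBase C φ y).left := by rw [hxy]
  have h2 : (mapBase C φ x).right = (mapBase C φ y).right := by rw [hxy]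
  simp only [mapBase, SemidirectProduct.map_left, SemidirectProduct.map_right] at h1 h2
  refine SemidirectProduct.ext ?_ ?_
  · funext y'
    exact hφ (congrFun h1 y')
  · exact h2

end mapBase

end Stmt10
namespace Stmt10core
open SemidirectProduct
variable (G : Type) [Group G]

section lemmas
variable {H : Type} [Group H] {C : Type} [AddCommGroup C]

theorem wr_mul_left (x y : Wr H C) :
    (x * y).left = fun c => x.left c * y.left (c + Multiplicative.toAdd x.right) := rfl

theorem wr_mul_right (x y : Wr H C) :
    (x * y).right = x.right * y.right := rfl

theorem wr_one_left : (1 : Wr H C).left = fun _ => 1 := rfl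
theorem wr_one_right : (1 : Wr H C).right = 1 := rfl

end lemmas

def β (a b : ZMod 2) : ZMod 4 := 2 * (b.val : ZMod 4) - (a.val : ZMod 4)

/-- base embedding `(Z4 → G) →* (Z2 → Wr G Z2)` -/
def baseMap : (ZMod 4 → G) →* (ZMod 2 → Wr G (ZMod 2)) where
  toFun g := fun a => SemidirectProduct.inl (fun b => g (β a b))
  map_one' := by
    funext a
    exact map_one SemidirectProduct.inl
  map_mul' g g' := by
    funext a
    exact map_mul SemidirectProduct.inl _ _

def f₁ : (ZMod 4 → G) →* Wr (Wr G (ZMod 2)) (ZMod 2) :=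
  SemidirectProduct.inl.comp (baseMap G)

theorem f₁_left (g : ZMod 4 → G) : (f₁ G g).left = baseMap G g := rfl
theorem f₁_right (g : ZMod 4 → G) : (f₁ G g).right = 1 := rfl
theorem baseMap_apply (g : ZMod 4 → G) (a : ZMod 2) :
    baseMap G g a = SemidirectProduct.inl (fun b => g (β a b)) := rfl

/-- the inner shift element `s ∈ Wr G Z2` -/
def s : Wr G (ZMod 2) := ⟨1, Multiplicative.ofAdd 1⟩

theorem s_left : (s G).left = fun _ => 1 := rfl
theorem s_right : (s G).right = Multiplicative.ofAdd 1 := rfl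

/-- the order-4 element -/
def T : Wr (Wr G (ZMod 2)) (ZMod 2) :=
  ⟨fun a => if a = 0 then s G else 1, Multiplicative.ofAdd 1⟩

theorem T_left : (T G).left = fun a => if a = 0 then s G else 1 := rfl
theorem T_right : (T G).right = Multiplicative.ofAdd 1 := rfl

theorem inl_left (f : ZMod 2 → G) :
    (SemidirectProduct.inl (φ := shiftHom G (ZMod 2)) f).left = f := rfl
theorem inl_right (f : ZMod 2 → G) :
    (SemidirectProduct.inl (φ := shiftHom G (ZMod 2)) f).right = 1 := rfl

theorem two_cases (a : ZMod 2) : a = 0 ∨ a = 1 := by revert a; decide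

theorem T_conj (g : ZMod 4 → G) :
    T G * f₁ G g = f₁ G (fun y => g (y + 1)) * T G := by
  refine SemidirectProduct.ext ?_ ?_
  · funext a
    simp only [wr_mul_left, f₁_left, f₁_right, T_left, T_right, toAdd_ofAdd, toAdd_one,
      add_zero, baseMap_apply]
    rcases two_cases a with rfl | rfl
    · rw [if_pos rfl]
      refine SemidirectProduct.ext ?_ ?_
      · funext b
        show 1 * g (β (0 + 1) (b + 1)) = g (β 0 b + 1) * 1
        rw [one_mul, mul_one]
        congr 1
        revert b; decide
      · show Multiplicative.ofAdd (1 : ZMod 2) * 1 = 1 * Multiplicative.ofAdd 1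
        rw [one_mul, mul_one]
    · rw [if_neg (by decide)]
      refine (one_mul _).trans (Eq.trans ?_ (mul_one _).symm)
      congr 1
      funext b
      congr 1
      revert b; decide
  · simp only [wr_mul_right, f₁_right, T_right, one_mul, mul_one]

theorem T_conj_pow (k : ℕ) :
    ∀ g : ZMod 4 → G,
      T G ^ k * f₁ G g = f₁ G (fun y => g (y + (k : ZMod 4))) * T G ^ k := by
  induction k with
  | zero => intro g; simp
  | succ n ih =>
    intro g
    calc T G ^ (n + 1) * f₁ G g = T G ^ n * (T G * f₁ G g) := by
          rw [pow_succ']; group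
      _ = T G ^ n * f₁ G (fun y => g (y + 1)) * T G := by
          rw [T_conj]; group
      _ = f₁ G (fun y => (fun y' => g (y' + 1)) (y + (n : ZMod 4))) * T G ^ n * T G := by
          rw [ih (fun y => g (y + 1))]
      _ = f₁ G (fun y => g (y + ((n + 1 : ℕ) : ZMod 4))) * T G ^ (n + 1) := by
          rw [pow_succ, mul_assoc]
          congr 2
          funext y
          congr 1
          push_cast
          ring

theorem s_mul_s : s G * s G = 1 := by
  refine SemidirectProduct.ext ?_ ?_
  · funext b
    simp only [wr_mul_left, s_left, s_right, wr_one_left, one_mul]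
  · simp only [wr_mul_right, s_right, wr_one_right]
    decide

theorem T_sq : T G ^ 2 = ⟨fun _ => s G, 1⟩ := by
  rw [pow_two]
  refine SemidirectProduct.ext ?_ ?_
  · funext a
    simp only [wr_mul_left, T_left, T_right, toAdd_ofAdd]
    rcases two_cases a with rfl | rfl
    · rw [if_pos rfl, if_neg (by decide), mul_one]
    · rw [if_neg (by decide), if_pos (by decide), one_mul]
  · simp only [wr_mul_right, T_right]
    decide

theorem T_pow_four : T G ^ 4 = 1 := by
  rw [show (4 : ℕ) = 2 + 2 from rfl, pow_add, T_sq]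
  refine SemidirectProduct.ext ?_ ?_
  · funext a
    simp only [wr_mul_left, wr_one_left]
    exact s_mul_s G
  · exact mul_one (1 : Multiplicative (ZMod 2))

def f₂ : Multiplicative (ZMod 4) →* Wr (Wr G (ZMod 2)) (ZMod 2) where
  toFun d := T G ^ (Multiplicative.toAdd d).val
  map_one' := by
    show T G ^ (0 : ZMod 4).val = 1
    simp
  map_mul' a b := by
    show T G ^ (Multiplicative.toAdd a + Multiplicative.toAdd b).val = _
    rw [ZMod.val_add, ← pow_eq_pow_mod _ (T_pow_four G), pow_add]

end Stmt10core
namespace Stmt10core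
open SemidirectProduct
variable (G : Type) [Group G]

def ψ₀ : Wr G (ZMod 4) →* Wr (Wr G (ZMod 2)) (ZMod 2) :=
  SemidirectProduct.lift (f₁ G) (f₂ G) (by
    intro d
    ext g
    simp only [MonoidHom.comp_apply, MulEquiv.coe_toMonoidHom, MulAut.conj_apply]
    rw [eq_mul_inv_iff_mul_eq]
    show f₁ G (fun y => g (y + Multiplicative.toAdd d)) * T G ^ (Multiplicative.toAdd d).val
        = T G ^ (Multiplicative.toAdd d).val * f₁ G g
    rw [T_conj_pow]
    congr 2
    funext y
    congr 1
    rw [ZMod.natCast_val, ZMod.cast_id])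

theorem ψ₀_apply (x : Wr G (ZMod 4)) : ψ₀ G x = f₁ G x.left * f₂ G x.right := rfl

theorem ψ₀_inj : Function.Injective (ψ₀ G) := by
  rw [← MonoidHom.ker_eq_bot_iff, Subgroup.eq_bot_iff_forall]
  intro x hx
  rw [MonoidHom.mem_ker, ψ₀_apply] at hx
  obtain ⟨g, d⟩ := x
  simp only at hx
  have hd' : ∀ d' : Multiplicative (ZMod 4), d' = Multiplicative.ofAdd 0 ∨
      d' = Multiplicative.ofAdd 1 ∨ d' = Multiplicative.ofAdd 2 ∨
      d' = Multiplicative.ofAdd 3 := by decide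
  have hd := hd' d
  have hval : ∀ z : ZMod 4, ∃ a b : ZMod 2, β a b = z := by decide
  rcases hd with rfl | rfl | rfl | rfl
  · -- d = 0 : f₂ = 1, so f₁ g = 1 and g = 1
    have h0 : f₂ G (Multiplicative.ofAdd 0) = 1 := by
      show T G ^ (Multiplicative.toAdd (Multiplicative.ofAdd (0 : ZMod 4))).val = 1
      rw [show (Multiplicative.toAdd (Multiplicative.ofAdd (0 : ZMod 4))).val = 0 from rfl,
        pow_zero]
    rw [h0, mul_one] at hx
    have hbase : baseMap G g = 1 := SemidirectProduct.inl_injective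
      (by exact hx.trans (map_one SemidirectProduct.inl).symm)
    have hg : g = 1 := by
      funext z
      obtain ⟨a, b, hab⟩ := hval z
      have := congrFun (congrArg SemidirectProduct.left (congrFun hbase a)) b
      simp only [baseMap_apply, Pi.one_apply, inl_left, wr_one_left] at this
      rw [hab] at this
      exact this
    rw [hg]
    rfl
  · -- d = 1 : right component of the outer group is nontrivial
    exfalso
    have h1 : f₂ G (Multiplicative.ofAdd 1) = T G := by
      show T G ^ (Multiplicative.toAdd (Multiplicative.ofAdd (1 : ZMod 4))).val = T G
      rw [show (Multiplicative.toAdd (Multiplicative.ofAdd (1 : ZMod 4))).val = 1 from rfl,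
        pow_one]
    rw [h1] at hx
    have := congrArg SemidirectProduct.right hx
    simp only [wr_mul_right, f₁_right, T_right, one_mul, wr_one_right] at this
    exact absurd this (by decide)
  · -- d = 2 : inner right component is nontrivial
    exfalso
    have h2 : f₂ G (Multiplicative.ofAdd 2) = ⟨fun _ => s G, 1⟩ := by
      show T G ^ (Multiplicative.toAdd (Multiplicative.ofAdd (2 : ZMod 4))).val = _
      rw [show (Multiplicative.toAdd (Multiplicative.ofAdd (2 : ZMod 4))).val = 2 from rfl,
        T_sq]
    rw [h2] at hx
    have := congrArg (fun z => (SemidirectProduct.left z 0).right) hx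
    simp only [wr_mul_left, wr_one_left, f₁_left, f₁_right, toAdd_one, add_zero,
      baseMap_apply, wr_mul_right, inl_right, s_right, one_mul, wr_one_right] at this
    exact absurd (show (1 : Multiplicative (ZMod 2)) * Multiplicative.ofAdd 1 = 1 from this)
      (by decide)
  · -- d = 3
    exfalso
    have h3 : f₂ G (Multiplicative.ofAdd 3) = ⟨fun _ => s G, 1⟩ * T G := by
      show T G ^ (Multiplicative.toAdd (Multiplicative.ofAdd (3 : ZMod 4))).val = _
      rw [show (Multiplicative.toAdd (Multiplicative.ofAdd (3 : ZMod 4))).val = 3 from rfl,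
        show (3 : ℕ) = 2 + 1 from rfl, pow_add, T_sq, pow_one]
    rw [h3] at hx
    have := congrArg SemidirectProduct.right hx
    simp only [wr_mul_right, f₁_right, T_right, one_mul, wr_one_right] at this
    exact absurd (show (1 : Multiplicative (ZMod 2)) * Multiplicative.ofAdd 1 = 1 from this)
      (by decide)

end Stmt10core

/-- If the wreath product `G ≀ (ℤ/2)` embeds into `G`, then so does `G ≀ (ℤ/4)`. -/
theorem stmt_10 (G : Type) [Group G]
    (h : ∃ φ : Wr G (ZMod 2) →* G, Function.Injective φ) :
    ∃ ψ : Wr G (ZMod 4) →* G, Function.Injective ψ := by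
  obtain ⟨φ, hφ⟩ := h
  refine ⟨φ.comp ((Stmt10.mapBase (ZMod 2) φ).comp (Stmt10core.ψ₀ G)), ?_⟩
  intro x y hxy
  exact Stmt10core.ψ₀_inj G (Stmt10.mapBase_inj (ZMod 2) φ hφ (hφ hxy))
end

section
/- Let p ≥ 2 and let G be a group such that there is an injective homomorphism φ₁ : G ≀ (ℤ/p) → G, where G ≀ (ℤ/p) = (ZMod p → G) ⋊ ZMod p with ZMod p acting by translation. Then for every n ≥ 1 there is an injective homomorphism G ≀ (ℤ/pⁿ) → G. -/
set_option linter.unusedSectionVars false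

namespace WrAux

variable {G H : Type} [Group G] [Group H] {C : Type} [AddCommGroup C]

/-- Constructor for `Wr`. -/
def mk (f : C → G) (c : C) : Wr G C :=
  SemidirectProduct.mk f (Multiplicative.ofAdd c)

@[simp] lemma mk_mul (f₁ f₂ : C → G) (c₁ c₂ : C) :
    mk f₁ c₁ * mk f₂ c₂ = mk (fun y => f₁ y * f₂ (y + c₁)) (c₁ + c₂) := rfl

lemma mk_surj (x : Wr G C) : ∃ f c, x = mk f c :=
  ⟨x.left, x.right.toAdd, rfl⟩

lemma mk_inj {f₁ f₂ : C → G} {c₁ c₂ : C} (h : mk f₁ c₁ = mk f₂ c₂) :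
    f₁ = f₂ ∧ c₁ = c₂ := by
  cases h; exact ⟨rfl, rfl⟩

lemma mk_congr {f₁ f₂ : C → G} {c₁ c₂ : C} (hf : f₁ = f₂) (hc : c₁ = c₂) :
    mk f₁ c₁ = mk f₂ c₂ := by rw [hf, hc]

/-- Functoriality of `Wr` in the group coordinate. -/
def wrMap (ψ : H →* G) (C : Type) [AddCommGroup C] : Wr H C →* Wr G C where
  toFun x := mk (fun y => ψ (x.left y)) x.right.toAdd
  map_one' := by
    show mk _ _ = mk 1 0
    simp [mk]
    apply SemidirectProduct.ext <;> simp
    · exact funext fun _ => ψ.map_one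
    · rfl
  map_mul' a b := SemidirectProduct.ext (funext fun y => ψ.map_mul _ _) rfl

lemma wrMap_injective {ψ : H →* G} (hψ : Function.Injective ψ) :
    Function.Injective (wrMap ψ C) := by
  intro a b hab
  obtain ⟨f₁, c₁, rfl⟩ := mk_surj a
  obtain ⟨f₂, c₂, rfl⟩ := mk_surj b
  obtain ⟨h1, h2⟩ := mk_inj hab
  have : f₁ = f₂ := funext fun y => hψ (congrFun h1 y)
  have hc : c₁ = c₂ := h2
  rw [this, hc]

/-- Transport `Wr G (ZMod a)` along an equality of moduli. -/
def wrCongr (G : Type) [Group G] {a b : ℕ} (h : a = b) :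
    Wr G (ZMod a) ≃* Wr G (ZMod b) := by
  subst h; exact MulEquiv.refl _

section Kal

variable (p m : ℕ) [NeZero p] [NeZero m]

def eps (a : ZMod p) (h : ZMod m) : ZMod (p * m) := ((a.val + p * h.val : ℕ) : ZMod (p * m))

def Tl (c : ZMod (p * m)) : ZMod p := (c.val : ZMod p)

def Dl (c : ZMod (p * m)) (a : ZMod p) : ZMod m := (((a.val + c.val) / p : ℕ) : ZMod m)

variable {p m}

lemma Tl_add (c₁ c₂ : ZMod (p * m)) : Tl p m (c₁ + c₂) = Tl p m c₁ + Tl p m c₂ := by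
  unfold Tl
  rw [ZMod.val_add, ← Nat.cast_add, ZMod.natCast_eq_natCast_iff]
  exact ((Nat.mod_modEq _ _).of_dvd (Dvd.intro m rfl))

lemma val_add_Tl (a : ZMod p) (c : ZMod (p * m)) :
    (a + Tl p m c).val = (a.val + c.val) % p := by
  unfold Tl
  rw [ZMod.val_add, ZMod.val_natCast, Nat.add_mod_mod]

lemma key_div (hp : 0 < p) (X Y : ℕ) : (X + Y) / p = X / p + (X % p + Y) / p := by
  conv_lhs => rw [← Nat.div_add_mod X p]
  rw [Nat.add_assoc, Nat.add_comm (p * (X / p)), Nat.add_mul_div_left _ _ hp, Nat.add_comm]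

lemma Dl_cocycle (c₁ c₂ : ZMod (p * m)) (a : ZMod p) :
    Dl p m (c₁ + c₂) a = Dl p m c₁ a + Dl p m c₂ (a + Tl p m c₁) := by
  have hp : 0 < p := Nat.pos_of_ne_zero (NeZero.ne p)
  unfold Dl
  rw [val_add_Tl, ZMod.val_add, ← Nat.cast_add, ZMod.natCast_eq_natCast_iff]
  set A := a.val with hA
  set X := c₁.val with hX
  set Y := c₂.val with hY
  have h1 : (A + (X + Y) % (p * m)) / p ≡ (A + (X + Y)) / p [MOD m] := by
    set K := m * ((X + Y) / (p * m)) with hK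
    have hS : p * K + (X + Y) % (p * m) = X + Y := by
      rw [hK, ← Nat.mul_assoc]; exact Nat.div_add_mod _ _
    have h2 : A + (X + Y) = (A + (X + Y) % (p * m)) + p * K := by omega
    rw [h2, Nat.add_mul_div_left _ _ hp]
    simp [Nat.ModEq, Nat.add_mul_mod_self_left, hK]
  have h3 : (A + (X + Y)) / p = (A + X) / p + ((A + X) % p + Y) / p := by
    rw [← Nat.add_assoc]; exact key_div hp (A + X) Y
  exact h1.trans (h3 ▸ Nat.ModEq.rfl)

lemma natCast_eq' {n : ℕ} [NeZero n] {u : ℕ} {x : ZMod n} (h : u ≡ x.val [MOD n]) :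
    (u : ZMod n) = x := by
  have := (ZMod.natCast_eq_natCast_iff u x.val n).mpr h
  rwa [ZMod.natCast_rightInverse x] at this

lemma eps_add (a : ZMod p) (h : ZMod m) (c : ZMod (p * m)) :
    eps p m a h + c = eps p m (a + Tl p m c) (h + Dl p m c a) := by
  have hp : 0 < p := Nat.pos_of_ne_zero (NeZero.ne p)
  symm
  unfold eps Dl
  apply natCast_eq'
  rw [val_add_Tl, ZMod.val_add, ZMod.val_add, ZMod.val_natCast, ZMod.val_natCast]
  set A := a.val with hA
  set H := h.val with hH
  set X := c.val with hX
  set Q := (A + X) / p with hQ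
  set R := (A + X) % p with hR
  have s1 : (H + Q % m) % m ≡ H + Q [MOD m] :=
    (Nat.mod_modEq _ _).trans ((Nat.mod_modEq Q m).add_left H)
  have s2 : p * ((H + Q % m) % m) ≡ p * (H + Q) [MOD p * m] := s1.mul_left' p
  have s3 : R + p * ((H + Q % m) % m) ≡ R + p * (H + Q) [MOD p * m] := s2.add_left R
  have e : R + p * (H + Q) = A + p * H + X := by
    rw [Nat.mul_add, hQ, hR]
    have := Nat.mod_add_div (A + X) p
    omega
  have s4 : ((A + p * H) % (p * m) + X) % (p * m) ≡ A + p * H + X [MOD p * m] :=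
    (Nat.mod_modEq _ _).trans ((Nat.mod_modEq (A + p * H) (p * m)).add_right X)
  exact (e ▸ s3).trans s4.symm

lemma eps_decomp (x : ZMod (p * m)) :
    eps p m ((x.val : ZMod p)) (((x.val / p : ℕ) : ZMod m)) = x := by
  have hp : 0 < p := Nat.pos_of_ne_zero (NeZero.ne p)
  have hlt : x.val < p * m := x.val_lt
  have hdiv : x.val / p < m := Nat.div_lt_of_lt_mul hlt
  unfold eps
  apply natCast_eq'
  have h1 : ((x.val : ZMod p)).val = x.val % p := ZMod.val_natCast _ _
  have h2 : (((x.val / p : ℕ) : ZMod m)).val = x.val / p := by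
    rw [ZMod.val_natCast]; exact Nat.mod_eq_of_lt hdiv
  rw [h1, h2, Nat.mod_add_div]

lemma Tl_zero : Tl p m 0 = 0 := by simp [Tl]

lemma Dl_zero (q : ZMod p) : Dl p m 0 q = 0 := by
  simp [Dl, Nat.div_eq_of_lt q.val_lt]

variable (G : Type) [Group G] (p m)

/-- Underlying function of the Kaloujnine embedding. -/
def kalFun (f : ZMod (p * m) → G) (c : ZMod (p * m)) : Wr (Wr G (ZMod m)) (ZMod p) :=
  mk (fun q => mk (fun y => f (eps p m q y)) (Dl p m c q)) (Tl p m c)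

variable {G p m}

lemma kalFun_mul (f₁ f₂ : ZMod (p * m) → G) (c₁ c₂ : ZMod (p * m)) :
    kalFun p m G f₁ c₁ * kalFun p m G f₂ c₂
      = kalFun p m G (fun x => f₁ x * f₂ (x + c₁)) (c₁ + c₂) := by
  unfold kalFun
  rw [mk_mul]
  refine mk_congr ?_ (Tl_add c₁ c₂).symm
  funext q
  rw [mk_mul]
  refine mk_congr ?_ (Dl_cocycle c₁ c₂ q).symm
  funext y
  rw [← eps_add]

variable (G p m)

/-- The Kaloujnine embedding `G ≀ ℤ/pm → (G ≀ ℤ/m) ≀ ℤ/p`. -/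
def kal : Wr G (ZMod (p * m)) →* Wr (Wr G (ZMod m)) (ZMod p) where
  toFun x := kalFun p m G x.left x.right.toAdd
  map_one' := by
    show kalFun p m G (fun _ => 1) 0 = 1
    unfold kalFun
    rw [Tl_zero]
    refine mk_congr ?_ rfl
    funext q
    rw [Dl_zero]
    rfl
  map_mul' a b := (kalFun_mul a.left b.left a.right.toAdd b.right.toAdd).symm

variable {G p m}

lemma kal_injective : Function.Injective (kal p m G) := by
  intro a b hab
  obtain ⟨f₁, c₁, rfl⟩ := mk_surj a
  obtain ⟨f₂, c₂, rfl⟩ := mk_surj b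
  have hab' : kalFun p m G f₁ c₁ = kalFun p m G f₂ c₂ := hab
  unfold kalFun at hab'
  obtain ⟨hF, hT⟩ := mk_inj hab'
  have hD : ∀ q, Dl p m c₁ q = Dl p m c₂ q := by
    intro q
    exact (mk_inj (congrFun hF q)).2
  have hf : ∀ q y, f₁ (eps p m q y) = f₂ (eps p m q y) := by
    intro q y
    exact congrFun (mk_inj (congrFun hF q)).1 y
  have hp : 0 < p := Nat.pos_of_ne_zero (NeZero.ne p)
  have hc : c₁ = c₂ := by
    have h1 : c₁.val % p = c₂.val % p := by
      simp only [Tl] at hT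
      have := congrArg ZMod.val hT
      rwa [ZMod.val_natCast, ZMod.val_natCast] at this
    have h2 : c₁.val / p = c₂.val / p := by
      have := congrArg ZMod.val (hD 0)
      have e : ∀ c : ZMod (p * m), (Dl p m c (0 : ZMod p)).val = c.val / p := by
        intro c
        have hdiv : c.val / p < m := Nat.div_lt_of_lt_mul c.val_lt
        simp [Dl, ZMod.val_natCast, ZMod.val_zero, Nat.mod_eq_of_lt hdiv]
      rwa [e, e] at this
    have : c₁.val = c₂.val := by
      have a1 := Nat.mod_add_div c₁.val p
      have a2 := Nat.mod_add_div c₂.val p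
      rw [h1, h2] at a1
      omega
    have := congrArg (Nat.cast : ℕ → ZMod (p * m)) this
    rwa [ZMod.natCast_rightInverse c₁, ZMod.natCast_rightInverse c₂] at this
  refine mk_congr ?_ hc
  funext x
  have := hf ((x.val : ZMod p)) (((x.val / p : ℕ) : ZMod m))
  rwa [eps_decomp] at this

end Kal

end WrAux

/-- If `p ≥ 2` and `G ≀ (ℤ/p)` embeds into `G`, then `G ≀ (ℤ/pⁿ)` embeds into `G`
for every `n ≥ 1`. -/
theorem stmt_13 (p : ℕ) (hp : 2 ≤ p) (G : Type) [Group G]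
    (h : ∃ φ₁ : Wr G (ZMod p) →* G, Function.Injective φ₁) :
    ∀ n : ℕ, 1 ≤ n → ∃ φ : Wr G (ZMod (p ^ n)) →* G, Function.Injective φ := by
  obtain ⟨φ₁, hφ₁⟩ := h
  haveI : NeZero p := ⟨by omega⟩
  intro n hn
  induction n with
  | zero => omega
  | succ k ih =>
    rcases Nat.eq_zero_or_pos k with hk | hk
    · subst hk
      refine ⟨φ₁.comp (WrAux.wrCongr G (pow_one p)).toMonoidHom, ?_⟩
      exact hφ₁.comp (WrAux.wrCongr G (pow_one p)).injective
    · obtain ⟨ψ, hψ⟩ := ih hk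
      haveI : NeZero (p ^ k) := ⟨pow_ne_zero _ (by omega)⟩
      refine ⟨(φ₁.comp ((WrAux.wrMap ψ (ZMod p)).comp
        ((WrAux.kal p (p ^ k) G).comp
          (WrAux.wrCongr G (pow_succ' p k)).toMonoidHom))), ?_⟩
      exact hφ₁.comp ((WrAux.wrMap_injective hψ).comp
        ((WrAux.kal_injective).comp (WrAux.wrCongr G (pow_succ' p k)).injective))
end
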